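/- Let Ω ⊆ ℝ² be open, and let ψ₁, ψ₂, ψ₃ : Ω → 𝕃 be differentiable paracomplex-valued functions with ψ₃² = ψ₁² + ψ₂² on Ω. Let C^c_{ab} be real numbers with C^c_{ab} = −C^c_{ba}, let ε₁ = ε₂ = 1, ε₃ = −1, and L^c_{ab} = C^c_{ab} − C^a_{bc} ε_a ε_c − C^b_{ac} ε_b ε_c. If ∂ψ_c/∂z̄ + (1/2) Σ_{a,b=1}^{3} L^c_{ab} conj(ψ_a) ψ_b = 0 holds on Ω for c = 1 and c = 2, then ψ₃ · (∂ψ₃/∂z̄ + (1/2) Σ_{a,b=1}^{3} L^3_{ab} conj(ψ_a) ψ_b) = 0 on Ω; in particular, the c = 3 equation holds at every point where ψ₃ is invertible in 𝕃. -/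

import Mathlib

/-- Paracomplex multiplication on 𝕃 = ℝ × ℝ. -/
def Lmul (z w : ℝ × ℝ) : ℝ × ℝ := (z.1 * w.1 + z.2 * w.2, z.1 * w.2 + z.2 * w.1)

/-- Paracomplex conjugation: a + τb ↦ a − τb. -/
def Lconj (z : ℝ × ℝ) : ℝ × ℝ := (z.1, -z.2)

/-- The paracomplex operator ∂/∂z̄: for ψ = (a, b), ∂ψ/∂z̄ = (1/2)(a_u − b_v, b_u − a_v). -/
noncomputable def dzbarL (ψ : ℝ × ℝ → ℝ × ℝ) (p : ℝ × ℝ) : ℝ × ℝ :=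
  ((1 / 2) * ((fderiv ℝ ψ p (1, 0)).1 - (fderiv ℝ ψ p (0, 1)).2),
   (1 / 2) * ((fderiv ℝ ψ p (1, 0)).2 - (fderiv ℝ ψ p (0, 1)).1))

lemma sq_hasFDerivAt (f : ℝ × ℝ → ℝ × ℝ) (p : ℝ × ℝ) (h : DifferentiableAt ℝ f p) :
    ∃ F : (ℝ × ℝ) →L[ℝ] ℝ × ℝ,
      HasFDerivAt (fun q => Lmul (f q) (f q)) F p ∧
      ∀ w, F w = (2 * ((f p).1 * (fderiv ℝ f p w).1 + (f p).2 * (fderiv ℝ f p w).2),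
                  2 * ((f p).1 * (fderiv ℝ f p w).2 + (f p).2 * (fderiv ℝ f p w).1)) := by
  have hD := h.hasFDerivAt
  have h1 : HasFDerivAt (fun q => (f q).1) ((ContinuousLinearMap.fst ℝ ℝ ℝ).comp (fderiv ℝ f p)) p := hD.fst
  have h2 : HasFDerivAt (fun q => (f q).2) ((ContinuousLinearMap.snd ℝ ℝ ℝ).comp (fderiv ℝ f p)) p := hD.snd
  have hg1 := (h1.mul h1).add (h2.mul h2)
  have hg2 := (h1.mul h2).add (h2.mul h1)
  refine ⟨_, (hg1.prodMk hg2), ?_⟩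
  intro w
  simp [Lmul, ContinuousLinearMap.add_apply, ContinuousLinearMap.smul_apply,
    ContinuousLinearMap.comp_apply]
  constructor <;> ring

lemma key3 (x : Fin 3 → ℝ × ℝ) (C : Fin 3 → Fin 3 → Fin 3 → ℝ)
    (hC : ∀ c a b, C c a b = -C c b a)
    (L : Fin 3 → Fin 3 → Fin 3 → ℝ)
    (hL : ∀ c a b, L c a b = C c a b - C a b c * (![1,1,-1] : Fin 3 → ℝ) a * (![1,1,-1] : Fin 3 → ℝ) c
      - C b a c * (![1,1,-1] : Fin 3 → ℝ) b * (![1,1,-1] : Fin 3 → ℝ) c) :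
    Lmul (x 0) (∑ a : Fin 3, ∑ b : Fin 3, L 0 a b • Lmul (Lconj (x a)) (x b)) +
    Lmul (x 1) (∑ a : Fin 3, ∑ b : Fin 3, L 1 a b • Lmul (Lconj (x a)) (x b)) -
    Lmul (x 2) (∑ a : Fin 3, ∑ b : Fin 3, L 2 a b • Lmul (Lconj (x a)) (x b)) = 0 := by
  have e1 : ∀ c, C c 0 0 = 0 := fun c => by have := hC c 0 0; linarith
  have e2 : ∀ c, C c 1 1 = 0 := fun c => by have := hC c 1 1; linarith
  have e3 : ∀ c, C c 2 2 = 0 := fun c => by have := hC c 2 2; linarith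
  have e4 : ∀ c, C c 1 0 = -C c 0 1 := fun c => hC c 1 0
  have e5 : ∀ c, C c 2 0 = -C c 0 2 := fun c => hC c 2 0
  have e6 : ∀ c, C c 2 1 = -C c 1 2 := fun c => hC c 2 1
  simp only [hL, Fin.sum_univ_three, Lmul, Lconj, e1, e2, e3, e4, e5, e6,
    Matrix.cons_val_zero, Matrix.cons_val_one, Matrix.head_cons, Matrix.cons_val_two,
    Matrix.tail_cons, Prod.smul_mk, smul_eq_mul, Prod.mk_add_mk, Prod.mk_sub_mk]
  ext <;> simp <;> ring

lemma Lmul_add (z w w' : ℝ × ℝ) : Lmul z (w + w') = Lmul z w + Lmul z w' := by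
  simp [Lmul]; constructor <;> ring

lemma Lmul_smul (z : ℝ × ℝ) (r : ℝ) (w : ℝ × ℝ) : Lmul z (r • w) = r • Lmul z w := by
  simp [Lmul]; constructor <;> ring

lemma Lmul_neg (z w : ℝ × ℝ) : Lmul z (-w) = -Lmul z w := by
  simp [Lmul]; constructor <;> ring

lemma Lmul_one (x : ℝ × ℝ) : Lmul (1, 0) x = x := by
  cases x; simp [Lmul]

lemma Lmul_comm (z w : ℝ × ℝ) : Lmul z w = Lmul w z := by
  simp [Lmul]; constructor <;> ring

lemma Lmul_assoc (z w v : ℝ × ℝ) : Lmul (Lmul z w) v = Lmul z (Lmul w v) := by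
  simp [Lmul]; constructor <;> ring

/-- Lemma (paracomplex case): if ψ₃² = ψ₁² + ψ₂² and ψ₁, ψ₂ satisfy the first two
equations ∂ψ_c/∂z̄ + (1/2) Σ L^c_{ab} conj(ψ_a) ψ_b = 0 on Ω, then
ψ₃ · (∂ψ₃/∂z̄ + (1/2) Σ L^3_{ab} conj(ψ_a) ψ_b) = 0 on Ω; in particular the third
equation holds wherever ψ₃ is invertible in 𝕃.  (Indices shifted to {0,1,2}.) -/
theorem lemma_third_equation_paracomplex
    (Ω : Set (ℝ × ℝ)) (hΩ : IsOpen Ω)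
    (ψ : Fin 3 → (ℝ × ℝ → ℝ × ℝ))
    (hdiff : ∀ a, DifferentiableOn ℝ (ψ a) Ω)
    (hsq : ∀ p ∈ Ω, Lmul (ψ 2 p) (ψ 2 p) = Lmul (ψ 0 p) (ψ 0 p) + Lmul (ψ 1 p) (ψ 1 p))
    (C : Fin 3 → Fin 3 → Fin 3 → ℝ)
    (hC : ∀ c a b, C c a b = -C c b a)
    (ε : Fin 3 → ℝ) (hε : ε = ![1, 1, -1])
    (L : Fin 3 → Fin 3 → Fin 3 → ℝ)
    (hL : ∀ c a b, L c a b = C c a b - C a b c * ε a * ε c - C b a c * ε b * ε c)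
    (heq : ∀ c : Fin 3, c = 0 ∨ c = 1 → ∀ p ∈ Ω,
      dzbarL (ψ c) p + (1 / 2 : ℝ) • ∑ a : Fin 3, ∑ b : Fin 3,
        L c a b • Lmul (Lconj (ψ a p)) (ψ b p) = 0) :
    ∀ p ∈ Ω,
      Lmul (ψ 2 p) (dzbarL (ψ 2) p + (1 / 2 : ℝ) • ∑ a : Fin 3, ∑ b : Fin 3,
        L 2 a b • Lmul (Lconj (ψ a p)) (ψ b p)) = 0 ∧
      ((∃ w : ℝ × ℝ, Lmul (ψ 2 p) w = (1, 0)) →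
        dzbarL (ψ 2) p + (1 / 2 : ℝ) • ∑ a : Fin 3, ∑ b : Fin 3,
          L 2 a b • Lmul (Lconj (ψ a p)) (ψ b p) = 0) := by
  subst hε
  intro p hp
  -- differentiability at p
  have hdA : ∀ a : Fin 3, DifferentiableAt ℝ (ψ a) p := fun a =>
    ((hdiff a).differentiableAt (hΩ.mem_nhds hp))
  obtain ⟨F0, hF0, hF0w⟩ := sq_hasFDerivAt (ψ 0) p (hdA 0)
  obtain ⟨F1, hF1, hF1w⟩ := sq_hasFDerivAt (ψ 1) p (hdA 1)
  obtain ⟨F2, hF2, hF2w⟩ := sq_hasFDerivAt (ψ 2) p (hdA 2)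
  have hEq : (fun q => Lmul (ψ 2 q) (ψ 2 q)) =ᶠ[nhds p]
      (fun q => Lmul (ψ 0 q) (ψ 0 q) + Lmul (ψ 1 q) (ψ 1 q)) := by
    filter_upwards [hΩ.mem_nhds hp] with q hq using hsq q hq
  have hF2' : HasFDerivAt (fun q => Lmul (ψ 2 q) (ψ 2 q)) (F0 + F1) p :=
    (hF0.add hF1).congr_of_eventuallyEq hEq
  have hFeq : F2 = F0 + F1 := hF2.unique hF2'
  -- derivative relation, componentwise
  have hu : F2 (1, 0) = F0 (1, 0) + F1 (1, 0) := by rw [hFeq]; simp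
  have hv : F2 (0, 1) = F0 (0, 1) + F1 (0, 1) := by rw [hFeq]; simp
  have hder : Lmul (ψ 2 p) (dzbarL (ψ 2) p) =
      Lmul (ψ 0 p) (dzbarL (ψ 0) p) + Lmul (ψ 1 p) (dzbarL (ψ 1) p) := by
    rw [hF0w, hF1w, hF2w] at hu hv
    have hu1 := congrArg Prod.fst hu
    have hu2 := congrArg Prod.snd hu
    have hv1 := congrArg Prod.fst hv
    have hv2 := congrArg Prod.snd hv
    simp only [Prod.fst_add, Prod.snd_add] at hu1 hu2 hv1 hv2
    simp only [Lmul, dzbarL, Prod.mk_add_mk, Prod.mk.injEq]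
    constructor
    · linear_combination hu1 / 4 - hv2 / 4
    · linear_combination hu2 / 4 - hv1 / 4
  -- abbreviations
  set E0 := ∑ a : Fin 3, ∑ b : Fin 3, L 0 a b • Lmul (Lconj (ψ a p)) (ψ b p) with hE0
  set E1 := ∑ a : Fin 3, ∑ b : Fin 3, L 1 a b • Lmul (Lconj (ψ a p)) (ψ b p) with hE1
  set E2 := ∑ a : Fin 3, ∑ b : Fin 3, L 2 a b • Lmul (Lconj (ψ a p)) (ψ b p) with hE2
  have h0 := heq 0 (Or.inl rfl) p hp
  have h1 := heq 1 (Or.inr rfl) p hp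
  have hd0 : dzbarL (ψ 0) p = -((1 / 2 : ℝ) • E0) := by rw [← hE0] at h0; linear_combination h0
  have hd1 : dzbarL (ψ 1) p = -((1 / 2 : ℝ) • E1) := by rw [← hE1] at h1; linear_combination h1
  have hkey := key3 (fun a => ψ a p) C hC L hL
  rw [← hE0, ← hE1, ← hE2] at hkey
  have hP : Lmul (ψ 0 p) E0 + Lmul (ψ 1 p) E1 = Lmul (ψ 2 p) E2 := sub_eq_zero.mp hkey
  have hmain : Lmul (ψ 2 p) (dzbarL (ψ 2) p + (1 / 2 : ℝ) • E2) = 0 := by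
    rw [Lmul_add, hder, hd0, hd1, Lmul_smul, Lmul_neg, Lmul_neg, Lmul_smul, Lmul_smul,
      ← hP, smul_add]
    abel
  refine ⟨hmain, ?_⟩
  rintro ⟨w, hw⟩
  have : dzbarL (ψ 2) p + (1 / 2 : ℝ) • E2 =
      Lmul (Lmul (ψ 2 p) w) (dzbarL (ψ 2) p + (1 / 2 : ℝ) • E2) := by
    rw [hw, Lmul_one]
  rw [this, Lmul_comm (ψ 2 p) w, Lmul_assoc, hmain]
  simp [Lmul]
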